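/- arXiv:2203.04527 — 8 statements merged into one kernel-verified Lean document; each statement's English description precedes it below -/
import Mathlib

section
/- Let T: H → H be α-averaged with α ∈ (0,1], x̄ ∈ Fix T, λ ∈ [0, 1/α], x ∈ H, and y = (1−λ)x + λTx. Then ‖Ty − y‖ ≤ ‖Tx − x‖. -/
variable {H : Type*} [NormedAddCommGroup H] [InnerProductSpace ℝ H] [CompleteSpace H]

/-- An operator is nonexpansive if it is 1-Lipschitz. -/
def Nonexpansive (T : H → H) : Prop := ∀ x y : H, ‖T x - T y‖ ≤ ‖x - y‖

/-- `T` is `α`-averaged: `T = (1-α)•Id + α•R` for some nonexpansive `R`. -/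
def Averaged (α : ℝ) (T : H → H) : Prop :=
  ∃ R : H → H, Nonexpansive R ∧ ∀ x : H, T x = (1 - α) • x + α • R x

/-- A set-valued operator is monotone. -/
def MonotoneOp (A : H → Set H) : Prop :=
  ∀ x u y v : H, u ∈ A x → v ∈ A y → (0 : ℝ) ≤ inner ℝ (x - y) (u - v)

/-- Maximal monotonicity. -/
def MaxMonotone (A : H → Set H) : Prop :=
  MonotoneOp A ∧ ∀ x u : H, (∀ y v : H, v ∈ A y → (0 : ℝ) ≤ inner ℝ (x - y) (u - v)) → u ∈ A x

/-- `J` is the resolvent of `γ • A`, i.e. `J = (Id + γA)⁻¹`: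
for every `x`, `(1/γ)(x - J x) ∈ A (J x)` (so `x ∈ (Id + γA)(J x)`). -/
def IsResolvent (γ : ℝ) (A : H → Set H) (J : H → H) : Prop :=
  ∀ x : H, γ⁻¹ • (x - J x) ∈ A (J x)

/-- Weak convergence of a sequence in a Hilbert space. -/
def WeakConv (y : ℕ → H) (p : H) : Prop :=
  ∀ u : H, Filter.Tendsto (fun k => (inner ℝ (y k) u : ℝ)) Filter.atTop (nhds (inner ℝ p u))

theorem stmt2 (α : ℝ) (hα0 : 0 < α) (hα1 : α ≤ 1) (T : H → H) (hT : Averaged α T)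
    (xb : H) (hxb : T xb = xb) (lam : ℝ) (hlam0 : 0 ≤ lam) (hlam1 : lam ≤ 1 / α)
    (x : H) (y : H) (hy : y = (1 - lam) • x + lam • T x) :
    ‖T y - y‖ ≤ ‖T x - x‖ := by
  obtain ⟨R, hR, hTR⟩ := hT
  have hμ0 : 0 ≤ lam * α := mul_nonneg hlam0 hα0.le
  have hμ1 : lam * α ≤ 1 := (le_div_iff₀ hα0).mp hlam1
  have hdiff : ∀ z, T z - z = α • (R z - z) := by
    intro z; rw [hTR]; module
  have hyx : y - x = (lam * α) • (R x - x) := by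
    rw [hy, hTR]; module
  have hxy : R x - y = (1 - lam * α) • (R x - x) := by
    rw [hy, hTR]; module
  have key : ‖R y - y‖ ≤ ‖R x - x‖ := by
    calc ‖R y - y‖ = ‖(R y - R x) + (R x - y)‖ := by rw [sub_add_sub_cancel]
      _ ≤ ‖R y - R x‖ + ‖R x - y‖ := norm_add_le _ _
      _ ≤ ‖y - x‖ + ‖(1 - lam * α) • (R x - x)‖ := by
          rw [hxy]; exact add_le_add (hR y x) le_rfl
      _ = (lam * α) * ‖R x - x‖ + (1 - lam * α) * ‖R x - x‖ := by
          rw [hyx, norm_smul, norm_smul, Real.norm_of_nonneg hμ0,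
            Real.norm_of_nonneg (by linarith)]
      _ = ‖R x - x‖ := by ring
  rw [hdiff y, hdiff x, norm_smul, norm_smul]
  exact mul_le_mul_of_nonneg_left key (norm_nonneg _)
end

section
/- Let T: H → H be α-averaged with α ∈ (0,1] and Fix T ≠ ∅, let λ ∈ (0, 1/α), F_λ = (1−λ)Id + λT. Suppose Id − T is metrically subregular at x̄ ∈ Fix T for 0: there exist κ > 0 and δ > 0 such that d(x, Fix T) ≤ κ‖x − Tx‖ for all x with ‖x − x̄‖ ≤ δ. Set ρ = (1 − λ(1−λα)/(ακ²))^{1/2}. Then ρ ∈ [0,1) and for every x with ‖x − x̄‖ ≤ δ: d(F_λ x, Fix T) ≤ ρ d(x, Fix T). -/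
variable {H : Type*} [NormedAddCommGroup H] [InnerProductSpace ℝ H] [CompleteSpace H]

lemma combo (t : ℝ) (a b : H) :
    ‖(1 - t) • a + t • b‖ ^ 2 =
      (1 - t) * ‖a‖ ^ 2 + t * ‖b‖ ^ 2 - t * (1 - t) * ‖a - b‖ ^ 2 := by
  have h : ∀ v : H, ‖v‖ ^ 2 = inner ℝ v v := fun v => (real_inner_self_eq_norm_sq v).symm
  rw [h, h, h, h]
  simp only [inner_add_add_self, inner_sub_sub_self, real_inner_smul_left,
    real_inner_smul_right, real_inner_comm a b]
  ring

set_option maxHeartbeats 2000000 in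
theorem stmt8 (α : ℝ) (hα0 : 0 < α) (hα1 : α ≤ 1) (T : H → H) (hT : Averaged α T)
    (hFix : ∃ x : H, T x = x) (lam : ℝ) (hlam0 : 0 < lam) (hlam1 : lam < 1 / α)
    (F : H → H) (hF : ∀ x : H, F x = (1 - lam) • x + lam • T x)
    (xb : H) (hxb : T xb = xb) (κ δ : ℝ) (hκ : 0 < κ) (hδ : 0 < δ)
    (hsub : ∀ x : H, ‖x - xb‖ ≤ δ → Metric.infDist x {z : H | T z = z} ≤ κ * ‖x - T x‖) :
    0 ≤ Real.sqrt (1 - lam * (1 - lam * α) / (α * κ ^ 2)) ∧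
    Real.sqrt (1 - lam * (1 - lam * α) / (α * κ ^ 2)) < 1 ∧
    ∀ x : H, ‖x - xb‖ ≤ δ →
      Metric.infDist (F x) {z : H | T z = z} ≤
        Real.sqrt (1 - lam * (1 - lam * α) / (α * κ ^ 2)) *
          Metric.infDist x {z : H | T z = z} := by
  obtain ⟨R, hR, hTR⟩ := hT
  set S : Set H := {z : H | T z = z} with hS
  set c : ℝ := lam * (1 - lam * α) / (α * κ ^ 2) with hc
  clear_value S c
  have hSne : S.Nonempty := ⟨xb, by rw [hS]; exact hxb⟩
  have hlamα : lam * α < 1 := by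
    have := (lt_div_iff₀ hα0).mp hlam1; linarith
  have hcpos : 0 < c := by
    rw [hc]
    exact div_pos (mul_pos hlam0 (by linarith)) (by positivity)
  refine ⟨Real.sqrt_nonneg _, ?_, ?_⟩
  · rw [Real.sqrt_lt' one_pos]; nlinarith
  intro x hx
  set d : ℝ := Metric.infDist x S with hd
  clear_value d
  have hd0 : 0 ≤ d := hd ▸ Metric.infDist_nonneg
  have key : ∀ z ∈ S, Metric.infDist (F x) S ^ 2 + c * d ^ 2 ≤ dist x z ^ 2 := by
    intro z hz
    have hzfix : T z = z := by rw [hS] at hz; exact hz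
    have hRz : R z = z := by
      have h1 : (1 - α) • z + α • R z = z := by rw [← hTR]; exact hzfix
      have h2 : α • (R z - z) = ((1 - α) • z + α • R z) - z := by module
      rw [h1, sub_self] at h2
      rcases smul_eq_zero.mp h2 with h | h
      · exact absurd h (ne_of_gt hα0)
      · exact sub_eq_zero.mp h
    have hTeq : T x - z = (1 - α) • (x - z) + α • (R x - z) := by
      rw [hTR x]; module
    have hTsq : ‖T x - z‖ ^ 2 ≤ ‖x - z‖ ^ 2 - α * (1 - α) * ‖x - R x‖ ^ 2 := by
      rw [hTeq, combo]
      have hRle : ‖R x - z‖ ^ 2 ≤ ‖x - z‖ ^ 2 := by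
        have h3 := hR x z
        rw [hRz] at h3
        exact pow_le_pow_left₀ (norm_nonneg _) h3 2
      have hsw : (x - z) - (R x - z) = x - R x := by abel
      rw [hsw]
      nlinarith [norm_nonneg (x - R x), sq_nonneg ‖x - R x‖]
    have hFeq : F x - z = (1 - lam) • (x - z) + lam • (T x - z) := by
      rw [hF x]; module
    have hxT : ‖x - T x‖ ^ 2 = α ^ 2 * ‖x - R x‖ ^ 2 := by
      have h4 : x - T x = α • (x - R x) := by rw [hTR x]; module
      rw [h4, norm_smul, mul_pow, Real.norm_eq_abs, sq_abs]
    have hFsq : ‖F x - z‖ ^ 2 ≤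
        ‖x - z‖ ^ 2 - lam * (1 - lam * α) / α * ‖x - T x‖ ^ 2 := by
      rw [hFeq, combo]
      have hsw : (x - z) - (T x - z) = x - T x := by abel
      rw [hsw, hxT]
      have hdiv : lam * (1 - lam * α) / α * (α ^ 2 * ‖x - R x‖ ^ 2) =
          lam * α * (1 - lam * α) * ‖x - R x‖ ^ 2 := by
        field_simp
      rw [hdiv]
      nlinarith [mul_le_mul_of_nonneg_left hTsq hlam0.le]
    have hsubx := hsub x hx
    rw [← hd] at hsubx
    have hdsq : d ^ 2 ≤ κ ^ 2 * ‖x - T x‖ ^ 2 := by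
      nlinarith [norm_nonneg (x - T x)]
    have hμ : c * d ^ 2 ≤ lam * (1 - lam * α) / α * ‖x - T x‖ ^ 2 := by
      have h5 : c * d ^ 2 ≤ c * (κ ^ 2 * ‖x - T x‖ ^ 2) :=
        mul_le_mul_of_nonneg_left hdsq hcpos.le
      have h6 : c * (κ ^ 2 * ‖x - T x‖ ^ 2) =
          lam * (1 - lam * α) / α * ‖x - T x‖ ^ 2 := by
        rw [hc]; field_simp
      linarith [h5, h6.le]
    have hinf : Metric.infDist (F x) S ≤ ‖F x - z‖ := by
      rw [show ‖F x - z‖ = dist (F x) z from (dist_eq_norm _ _).symm]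
      exact Metric.infDist_le_dist_of_mem hz
    have hinfsq : Metric.infDist (F x) S ^ 2 ≤ ‖F x - z‖ ^ 2 :=
      pow_le_pow_left₀ Metric.infDist_nonneg hinf 2
    rw [dist_eq_norm]
    linarith
  have hLnn : 0 ≤ Metric.infDist (F x) S ^ 2 + c * d ^ 2 :=
    add_nonneg (sq_nonneg _) (mul_nonneg hcpos.le (sq_nonneg _))
  have hmain : Metric.infDist (F x) S ^ 2 + c * d ^ 2 ≤ d ^ 2 := by
    have h1 : ∀ z ∈ S, Real.sqrt (Metric.infDist (F x) S ^ 2 + c * d ^ 2) ≤ dist x z := by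
      intro z hz
      have h2 := Real.sqrt_le_sqrt (key z hz)
      rwa [Real.sqrt_sq dist_nonneg] at h2
    have h2 : Real.sqrt (Metric.infDist (F x) S ^ 2 + c * d ^ 2) ≤ d := by
      by_contra hlt
      push_neg at hlt
      have hlt2 : Metric.infDist x S <
          Real.sqrt (Metric.infDist (F x) S ^ 2 + c * d ^ 2) := by rw [← hd]; exact hlt
      obtain ⟨z, hz, hdz⟩ := (Metric.infDist_lt_iff hSne).mp hlt2
      exact absurd (h1 z hz) (not_le.mpr hdz)
    calc Metric.infDist (F x) S ^ 2 + c * d ^ 2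
        = Real.sqrt (Metric.infDist (F x) S ^ 2 + c * d ^ 2) ^ 2 := (Real.sq_sqrt hLnn).symm
      _ ≤ d ^ 2 := pow_le_pow_left₀ (Real.sqrt_nonneg _) h2 2
  have hF2 : Metric.infDist (F x) S ^ 2 ≤ (1 - c) * d ^ 2 := by nlinarith
  by_cases h1c : 0 ≤ 1 - c
  · have h7 : Metric.infDist (F x) S ≤ Real.sqrt ((1 - c) * d ^ 2) := by
      rw [← Real.sqrt_sq (Metric.infDist_nonneg (x := F x) (s := S))]
      exact Real.sqrt_le_sqrt hF2
    rwa [Real.sqrt_mul h1c, Real.sqrt_sq hd0] at h7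
  · push_neg at h1c
    have hd2 : d ^ 2 ≤ 0 := by nlinarith [sq_nonneg (Metric.infDist (F x) S)]
    have hdz : d = 0 := by nlinarith
    have h8 : Metric.infDist (F x) S = 0 := by
      nlinarith [Metric.infDist_nonneg (x := F x) (s := S)]
    rw [h8, hdz, mul_zero]
end

section
/- Let A: H → 2^H be maximally monotone with zer A ≠ ∅, x̄ ∈ zer A, γ > 0. If A is metrically subregular at x̄ for 0 with constant κ on B[x̄;δ] (i.e., d(x, A⁻¹0) ≤ κ d(0, Ax) for all x ∈ B[x̄;δ]), then for all x ∈ B[x̄;δ]: d(x, (Id − J_{γA})⁻¹0) ≤ (1 + κ/γ)‖x − J_{γA}x‖. -/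
variable {H : Type*} [NormedAddCommGroup H] [InnerProductSpace ℝ H] [CompleteSpace H]

theorem stmt9 (A : H → Set H) (hA : MaxMonotone A) (hz : ∃ x : H, (0 : H) ∈ A x)
    (xb : H) (hxb : (0 : H) ∈ A xb) (γ : ℝ) (hγ : 0 < γ)
    (J : H → H) (hJ : IsResolvent γ A J)
    (κ δ : ℝ) (hκ : 0 < κ) (hδ : 0 < δ)
    (hsub : ∀ x : H, ‖x - xb‖ ≤ δ →
      Metric.infDist x {z : H | (0 : H) ∈ A z} ≤ κ * Metric.infDist (0 : H) (A x)) :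
    ∀ x : H, ‖x - xb‖ ≤ δ →
      Metric.infDist x {z : H | z - J z = 0} ≤ (1 + κ / γ) * ‖x - J x‖ := by
  have hmono := hA.1
  -- 0 ∈ A z implies z - J z = 0
  have hfix : ∀ z : H, (0 : H) ∈ A z → z - J z = 0 := by
    intro z h0
    have hm := hmono (J z) (γ⁻¹ • (z - J z)) z 0 (hJ z) h0
    rw [sub_zero, real_inner_smul_right] at hm
    have hinner : (inner ℝ (J z - z) (z - J z) : ℝ) = -‖z - J z‖ ^ 2 := by
      rw [show J z - z = -(z - J z) by abel, inner_neg_left, real_inner_self_eq_norm_sq]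
    rw [hinner] at hm
    have : ‖z - J z‖ ^ 2 ≤ 0 := by nlinarith [inv_pos.mpr hγ]
    have : ‖z - J z‖ = 0 := by nlinarith [norm_nonneg (z - J z)]
    exact norm_eq_zero.mp this
  -- conversely
  have hfix' : ∀ z : H, z - J z = 0 → (0 : H) ∈ A z := by
    intro z h
    have hz' : J z = z := by rw [← sub_eq_zero]; rw [show J z - z = -(z - J z) by abel, h, neg_zero]
    have := hJ z
    rw [hz', sub_self, smul_zero] at this
    exact this
  have hseteq : {z : H | z - J z = 0} = {z : H | (0 : H) ∈ A z} := by
    ext z; exact ⟨hfix' z, hfix z⟩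
  have hJxb : J xb = xb := by
    have := hfix xb hxb
    rw [← sub_eq_zero, show J xb - xb = -(xb - J xb) by abel, this, neg_zero]
  intro x hx
  -- J x is in the ball
  have hJne : ‖J x - xb‖ ≤ ‖x - xb‖ := by
    have hm := hmono (J x) (γ⁻¹ • (x - J x)) xb 0 (hJ x) hxb
    rw [sub_zero, real_inner_smul_right] at hm
    have h1 : (0 : ℝ) ≤ inner ℝ (J x - xb) (x - J x) := by
      have := inv_pos.mpr hγ
      nlinarith
    have h2 : ‖J x - xb‖ ^ 2 ≤ inner ℝ (J x - xb) (x - xb) := by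
      have : (inner ℝ (J x - xb) (x - xb) : ℝ)
          = inner ℝ (J x - xb) (x - J x) + inner ℝ (J x - xb) (J x - xb) := by
        rw [← inner_add_right]; congr 1; abel
      rw [this, real_inner_self_eq_norm_sq]; linarith
    have h3 : (inner ℝ (J x - xb) (x - xb) : ℝ) ≤ ‖J x - xb‖ * ‖x - xb‖ :=
      real_inner_le_norm _ _
    nlinarith [norm_nonneg (J x - xb), norm_nonneg (x - xb)]
  have hJball : ‖J x - xb‖ ≤ δ := hJne.trans hx
  have hd1 : Metric.infDist (0 : H) (A (J x)) ≤ γ⁻¹ * ‖x - J x‖ := by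
    have := Metric.infDist_le_dist_of_mem (x := (0 : H)) (hJ x)
    rwa [dist_eq_norm, zero_sub, norm_neg, norm_smul, Real.norm_eq_abs,
      abs_of_pos (inv_pos.mpr hγ)] at this
  have hd2 : Metric.infDist (J x) {z : H | (0 : H) ∈ A z} ≤ κ / γ * ‖x - J x‖ := by
    calc Metric.infDist (J x) {z : H | (0 : H) ∈ A z}
        ≤ κ * Metric.infDist (0 : H) (A (J x)) := hsub (J x) hJball
      _ ≤ κ * (γ⁻¹ * ‖x - J x‖) := by
          exact mul_le_mul_of_nonneg_left hd1 hκ.le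
      _ = κ / γ * ‖x - J x‖ := by ring
  calc Metric.infDist x {z : H | z - J z = 0}
      ≤ Metric.infDist (J x) {z : H | z - J z = 0} + dist x (J x) :=
        Metric.infDist_le_infDist_add_dist
    _ = Metric.infDist (J x) {z : H | (0 : H) ∈ A z} + ‖x - J x‖ := by
        rw [hseteq, dist_eq_norm]
    _ ≤ κ / γ * ‖x - J x‖ + ‖x - J x‖ := by linarith
    _ = (1 + κ / γ) * ‖x - J x‖ := by ring
end

section
/- Let (G_k) be nonexpansive operators on H, (e_k) ⊂ H with ∑‖e_k‖ < ∞. Define y_{k+1} = G_k y_k + e_k and ξ_0(i) = y_i, ξ_{k+1}(i) = G_{k+i} ξ_k(i). Suppose for every i, (ξ_k(i))_k converges weakly to some ξ(i) ∈ H. Then (ξ(i))_i converges strongly to some ξ̄ ∈ H, and (y_k) converges weakly to ξ̄. -/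
variable {H : Type*} [NormedAddCommGroup H] [InnerProductSpace ℝ H] [CompleteSpace H]

theorem stmt12 (G : ℕ → H → H) (hG : ∀ k, Nonexpansive (G k))
    (e : ℕ → H) (he : Summable fun k => ‖e k‖)
    (y : ℕ → H) (hy : ∀ k, y (k + 1) = G k (y k) + e k)
    (ξ : ℕ → ℕ → H) (hξ0 : ∀ i, ξ 0 i = y i)
    (hξ : ∀ k i, ξ (k + 1) i = G (k + i) (ξ k i))
    (ξlim : ℕ → H) (hweak : ∀ i, WeakConv (fun k => ξ k i) (ξlim i)) :
    ∃ ξbar : H, Filter.Tendsto ξlim Filter.atTop (nhds ξbar) ∧ WeakConv y ξbar := by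
  -- Bound A : ‖ξ k (i+1) - ξ (k+1) i‖ ≤ ‖e i‖
  have hA : ∀ i k, ‖ξ k (i + 1) - ξ (k + 1) i‖ ≤ ‖e i‖ := by
    intro i k
    induction k with
    | zero =>
      have h1 : ξ 0 (i + 1) = G i (y i) + e i := by rw [hξ0, hy]
      have h2 : ξ 1 i = G i (y i) := by
        have := hξ 0 i
        simpa [hξ0, Nat.zero_add] using this
      rw [h1, h2]; simp
    | succ k ih =>
      have h1 : ξ (k + 1) (i + 1) = G (k + (i + 1)) (ξ k (i + 1)) := hξ k (i + 1)
      have h2 : ξ (k + 2) i = G ((k + 1) + i) (ξ (k + 1) i) := hξ (k + 1) i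
      have h3 : (k + 1) + i = k + (i + 1) := by omega
      rw [h1, h2, h3]
      exact le_trans (hG (k + (i + 1)) _ _) ih
  -- T i : tail sums
  set T : ℕ → ℝ := fun i => ∑' j, ‖e (j + i)‖ with hT
  have hTtend : Filter.Tendsto T Filter.atTop (nhds 0) := by rw [hT]; exact tendsto_sum_nat_add (fun j => ‖e j‖)
  have hTsummable : ∀ i, Summable fun j => ‖e (j + i)‖ := fun i =>
    (summable_nat_add_iff i).2 he
  -- Bound B : ‖y (k+i) - ξ k i‖ ≤ T i
  have hB : ∀ i k, ‖y (k + i) - ξ k i‖ ≤ T i := by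
    intro i k
    have hB' : ‖y (k + i) - ξ k i‖ ≤ ∑ j ∈ Finset.range k, ‖e (j + i)‖ := by
      induction k with
      | zero => simp [hξ0, Nat.zero_add]
      | succ k ih =>
        have h1 : y (k + 1 + i) = G (k + i) (y (k + i)) + e (k + i) := by
          have h3 : k + 1 + i = (k + i) + 1 := by omega
          rw [h3, hy]
        rw [h1, hξ, Finset.sum_range_succ]
        calc ‖G (k + i) (y (k + i)) + e (k + i) - G (k + i) (ξ k i)‖
            ≤ ‖G (k + i) (y (k + i)) - G (k + i) (ξ k i)‖ + ‖e (k + i)‖ := by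
              have : G (k + i) (y (k + i)) + e (k + i) - G (k + i) (ξ k i)
                  = (G (k + i) (y (k + i)) - G (k + i) (ξ k i)) + e (k + i) := by abel
              rw [this]; exact norm_add_le _ _
          _ ≤ ‖y (k + i) - ξ k i‖ + ‖e (k + i)‖ := by
              have := hG (k + i) (y (k + i)) (ξ k i); linarith
          _ ≤ ∑ j ∈ Finset.range k, ‖e (j + i)‖ + ‖e (k + i)‖ := by linarith
    exact hB'.trans (Summable.sum_le_tsum _ (fun j _ => norm_nonneg _) (hTsummable i))
  have hTnonneg : ∀ i, 0 ≤ T i := fun i => tsum_nonneg fun j => norm_nonneg _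
  -- Cauchy estimate for ξlim
  have hC : ∀ i, ‖ξlim (i + 1) - ξlim i‖ ≤ ‖e i‖ := by
    intro i
    set u := ξlim (i + 1) - ξlim i with hu
    have t1 := hweak (i + 1) u
    have t2 : Filter.Tendsto (fun k => (inner ℝ (ξ (k + 1) i) u : ℝ)) Filter.atTop
        (nhds (inner ℝ (ξlim i) u)) := (hweak i u).comp (Filter.tendsto_add_atTop_nat 1)
    have t := t1.sub t2
    have hlim : ‖u‖ ^ 2 ≤ ‖e i‖ * ‖u‖ := by
      have heq : (inner ℝ (ξlim (i + 1)) u : ℝ) - inner ℝ (ξlim i) u = ‖u‖ ^ 2 := by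
        rw [← inner_sub_left, ← hu, real_inner_self_eq_norm_sq]
      rw [← heq]
      refine le_of_tendsto t (Filter.Eventually.of_forall fun k => ?_)
      calc (inner ℝ (ξ k (i + 1)) u : ℝ) - inner ℝ (ξ (k + 1) i) u
          = inner ℝ (ξ k (i + 1) - ξ (k + 1) i) u := by rw [inner_sub_left]
        _ ≤ ‖ξ k (i + 1) - ξ (k + 1) i‖ * ‖u‖ := real_inner_le_norm _ _
        _ ≤ ‖e i‖ * ‖u‖ := mul_le_mul_of_nonneg_right (hA i k) (norm_nonneg _)
    rcases eq_or_lt_of_le (norm_nonneg u) with h | h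
    · rw [← h]; exact norm_nonneg _
    · nlinarith
  -- ξlim is Cauchy, get ξbar
  have hcauchy : CauchySeq ξlim := by
    apply cauchySeq_of_dist_le_of_summable (fun i => ‖e i‖) _ he
    intro n
    rw [dist_eq_norm, norm_sub_rev]
    exact hC n
  obtain ⟨ξbar, hξbar⟩ := cauchySeq_tendsto_of_complete hcauchy
  refine ⟨ξbar, hξbar, ?_⟩
  -- weak convergence of y to ξbar
  intro u
  rw [Metric.tendsto_atTop]
  intro ε hε
  set C : ℝ := ‖u‖ + 1 with hC'
  have hCpos : 0 < C := by positivity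
  set δ : ℝ := ε / (3 * C) with hδ
  have hδpos : 0 < δ := by positivity
  have h1 : ∀ᶠ i in Filter.atTop, T i < δ := hTtend.eventually (gt_mem_nhds hδpos)
  have h2 : ∀ᶠ i in Filter.atTop, ‖ξlim i - ξbar‖ < δ := by
    have := hξbar.eventually (Metric.ball_mem_nhds ξbar hδpos)
    filter_upwards [this] with i hi
    rwa [dist_eq_norm] at hi
  obtain ⟨i, hTi, hξi⟩ := (h1.and h2).exists
  have h3 := (hweak i u).eventually (Metric.ball_mem_nhds _ (by positivity : (0:ℝ) < ε / 3))
  rw [Filter.eventually_atTop] at h3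
  obtain ⟨K, hK⟩ := h3
  refine ⟨K + i, fun n hn => ?_⟩
  set k := n - i with hk
  have hni : n = k + i := by omega
  have hkK : K ≤ k := by omega
  have b1 : |(inner ℝ (y n) u : ℝ) - inner ℝ (ξ k i) u| ≤ T i * ‖u‖ := by
    rw [← inner_sub_left]
    calc |(inner ℝ (y n - ξ k i) u : ℝ)| ≤ ‖y n - ξ k i‖ * ‖u‖ := abs_real_inner_le_norm _ _
      _ ≤ T i * ‖u‖ := by
          have := hB i k; rw [← hni] at this
          exact mul_le_mul_of_nonneg_right this (norm_nonneg _)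
  have b2 : |(inner ℝ (ξ k i) u : ℝ) - inner ℝ (ξlim i) u| < ε / 3 := by
    have := hK k hkK
    rwa [Real.dist_eq] at this
  have b3 : |(inner ℝ (ξlim i) u : ℝ) - inner ℝ ξbar u| ≤ ‖ξlim i - ξbar‖ * ‖u‖ := by
    rw [← inner_sub_left]
    exact abs_real_inner_le_norm _ _
  have hb1 : T i * ‖u‖ < ε / 3 := by
    calc T i * ‖u‖ ≤ T i * C := by
          apply mul_le_mul_of_nonneg_left _ (hTnonneg i)
          simp [hC']
      _ < δ * C := by exact mul_lt_mul_of_pos_right hTi hCpos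
      _ = ε / 3 := by rw [hδ]; field_simp
  have hb3 : ‖ξlim i - ξbar‖ * ‖u‖ < ε / 3 := by
    calc ‖ξlim i - ξbar‖ * ‖u‖ ≤ ‖ξlim i - ξbar‖ * C := by
          apply mul_le_mul_of_nonneg_left _ (norm_nonneg _)
          simp [hC']
      _ < δ * C := mul_lt_mul_of_pos_right hξi hCpos
      _ = ε / 3 := by rw [hδ]; field_simp
  rw [Real.dist_eq]
  have tri : |(inner ℝ (y n) u : ℝ) - inner ℝ ξbar u| ≤
      |(inner ℝ (y n) u : ℝ) - inner ℝ (ξ k i) u| + |(inner ℝ (ξ k i) u : ℝ) - inner ℝ (ξlim i) u|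
        + |(inner ℝ (ξlim i) u : ℝ) - inner ℝ ξbar u| := by
    have := abs_sub_le ((inner ℝ (y n) u : ℝ)) (inner ℝ (ξ k i) u) (inner ℝ ξbar u)
    have := abs_sub_le ((inner ℝ (ξ k i) u : ℝ)) (inner ℝ (ξlim i) u) (inner ℝ ξbar u)
    linarith [abs_sub_le ((inner ℝ (y n) u : ℝ)) (inner ℝ (ξ k i) u) (inner ℝ ξbar u),
      abs_sub_le ((inner ℝ (ξ k i) u : ℝ)) (inner ℝ (ξlim i) u) (inner ℝ ξbar u)]
  linarith
end

section
/- Let (G_k) be nonexpansive operators on H, (e_k) ⊂ H with ∑‖e_k‖ < ∞. Define y_{k+1} = G_k y_k + e_k and ξ_0(i) = y_i, ξ_{k+1}(i) = G_{k+i} ξ_k(i). Suppose for every i, (ξ_k(i))_k converges strongly to some ξ(i) ∈ H. Then (y_k) converges strongly to lim_i ξ(i). -/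
variable {H : Type*} [NormedAddCommGroup H] [InnerProductSpace ℝ H] [CompleteSpace H]

theorem stmt13 (G : ℕ → H → H) (hG : ∀ k, Nonexpansive (G k))
    (e : ℕ → H) (he : Summable fun k => ‖e k‖)
    (y : ℕ → H) (hy : ∀ k, y (k + 1) = G k (y k) + e k)
    (ξ : ℕ → ℕ → H) (hξ0 : ∀ i, ξ 0 i = y i)
    (hξ : ∀ k i, ξ (k + 1) i = G (k + i) (ξ k i))
    (ξlim : ℕ → H)
    (hstrong : ∀ i, Filter.Tendsto (fun k => ξ k i) Filter.atTop (nhds (ξlim i))) :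
    ∃ ξbar : H, Filter.Tendsto ξlim Filter.atTop (nhds ξbar) ∧
      Filter.Tendsto y Filter.atTop (nhds ξbar) := by
  -- Lemma A: ‖ξ k (i+1) - ξ (k+1) i‖ ≤ ‖e i‖
  have hA : ∀ k i, ‖ξ k (i + 1) - ξ (k + 1) i‖ ≤ ‖e i‖ := by
    intro k
    induction k with
    | zero =>
      intro i
      have h1 : ξ 0 (i + 1) = G i (y i) + e i := by rw [hξ0, hy]
      have h2 : ξ 1 i = G i (y i) := by rw [hξ 0 i, hξ0]; norm_num
      rw [h1, h2]
      simp
    | succ k ih =>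
      intro i
      have h1 : ξ (k + 1) (i + 1) = G (k + i + 1) (ξ k (i + 1)) := by
        rw [hξ k (i + 1)]; ring_nf
      have h2 : ξ (k + 2) i = G (k + i + 1) (ξ (k + 1) i) := by
        rw [hξ (k + 1) i]; ring_nf
      calc ‖ξ (k + 1) (i + 1) - ξ (k + 2) i‖
          ≤ ‖ξ k (i + 1) - ξ (k + 1) i‖ := by rw [h1, h2]; exact hG _ _ _
        _ ≤ ‖e i‖ := ih i
  -- Limit: ‖ξlim (i+1) - ξlim i‖ ≤ ‖e i‖
  have hlimA : ∀ i, ‖ξlim (i + 1) - ξlim i‖ ≤ ‖e i‖ := by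
    intro i
    have h1 : Filter.Tendsto (fun k => ‖ξ k (i + 1) - ξ (k + 1) i‖) Filter.atTop
        (nhds ‖ξlim (i + 1) - ξlim i‖) := by
      apply Filter.Tendsto.norm
      exact (hstrong (i + 1)).sub ((hstrong i).comp (Filter.tendsto_add_atTop_nat 1))
    exact le_of_tendsto h1 (Filter.Eventually.of_forall fun k => hA k i)
  -- ξlim is Cauchy
  have hcauchy : CauchySeq ξlim := by
    apply cauchySeq_of_dist_le_of_summable (fun i => ‖e i‖) _ he
    intro n
    rw [dist_eq_norm, norm_sub_rev]
    exact hlimA n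
  obtain ⟨ξbar, hξbar⟩ := cauchySeq_tendsto_of_complete hcauchy
  refine ⟨ξbar, hξbar, ?_⟩
  -- Lemma B: ‖y (k+i) - ξ k i‖ ≤ ∑ j in range k, ‖e (j+i)‖
  have hB : ∀ k i, ‖y (k + i) - ξ k i‖ ≤ ∑ j ∈ Finset.range k, ‖e (j + i)‖ := by
    intro k
    induction k with
    | zero => intro i; simp [hξ0]
    | succ k ih =>
      intro i
      have h1 : y (k + i + 1) = G (k + i) (y (k + i)) + e (k + i) := hy (k + i)
      have h2 : ξ (k + 1) i = G (k + i) (ξ k i) := hξ k i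
      have : y (k + 1 + i) - ξ (k + 1) i
          = (G (k + i) (y (k + i)) - G (k + i) (ξ k i)) + e (k + i) := by
        have : k + 1 + i = k + i + 1 := by ring
        rw [this, h1, h2]; abel
      rw [this, Finset.sum_range_succ]
      calc ‖(G (k + i) (y (k + i)) - G (k + i) (ξ k i)) + e (k + i)‖
          ≤ ‖G (k + i) (y (k + i)) - G (k + i) (ξ k i)‖ + ‖e (k + i)‖ := norm_add_le _ _
        _ ≤ ‖y (k + i) - ξ k i‖ + ‖e (k + i)‖ := by
            gcongr; exact hG _ _ _
        _ ≤ (∑ j ∈ Finset.range k, ‖e (j + i)‖) + ‖e (k + i)‖ := by gcongr; exact ih i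
  -- tail sums tend to 0
  have htail : Filter.Tendsto (fun i => ∑' j, ‖e (j + i)‖) Filter.atTop (nhds 0) :=
    tendsto_sum_nat_add fun k => ‖e k‖
  -- main ε-argument
  rw [Metric.tendsto_atTop]
  intro ε hε
  have hε3 : 0 < ε / 3 := by linarith
  have h1 := (Metric.tendsto_atTop.1 hξbar) (ε / 3) hε3
  have h2 := (Metric.tendsto_atTop.1 htail) (ε / 3) hε3
  obtain ⟨i1, hi1⟩ := h1
  obtain ⟨i2, hi2⟩ := h2
  set i := max i1 i2 with hi
  have hd1 : dist (ξlim i) ξbar < ε / 3 := hi1 i (le_max_left _ _)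
  have hd2 : (∑' j, ‖e (j + i)‖) < ε / 3 := by
    have := hi2 i (le_max_right _ _)
    rw [Real.dist_eq] at this
    have hnn : 0 ≤ ∑' j, ‖e (j + i)‖ := tsum_nonneg fun j => norm_nonneg _
    rw [abs_of_nonneg (by linarith [hnn] : (0:ℝ) ≤ ∑' j, ‖e (j + i)‖ - 0)] at this
    linarith
  obtain ⟨N, hN⟩ := (Metric.tendsto_atTop.1 (hstrong i)) (ε / 3) hε3
  refine ⟨i + N, fun n hn => ?_⟩
  set k := n - i with hk
  have hki : k + i = n := by omega
  have hkN : N ≤ k := by omega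
  have hsum : Summable fun j => ‖e (j + i)‖ := (summable_nat_add_iff i).2 he
  have hB' : ‖y n - ξ k i‖ ≤ ∑' j, ‖e (j + i)‖ := by
    calc ‖y n - ξ k i‖ = ‖y (k + i) - ξ k i‖ := by rw [hki]
      _ ≤ ∑ j ∈ Finset.range k, ‖e (j + i)‖ := hB k i
      _ ≤ ∑' j, ‖e (j + i)‖ := Summable.sum_le_tsum _ (fun j _ => norm_nonneg _) hsum
  have hd3 : dist (ξ k i) (ξlim i) < ε / 3 := hN k hkN
  calc dist (y n) ξbar ≤ dist (y n) (ξ k i) + dist (ξ k i) (ξlim i) + dist (ξlim i) ξbar :=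
        dist_triangle4 _ _ _ _
    _ < ε / 3 + ε / 3 + ε / 3 := by
        apply add_lt_add_of_lt_of_lt (add_lt_add_of_le_of_lt _ hd3) hd1
        rw [dist_eq_norm]; exact lt_of_le_of_lt hB' hd2 |>.le
    _ = ε := by ring
end

section
/- Let T_k: H → H be α_k-averaged with α_k ∈ (0,1], λ_k ∈ [0, 1/α_k], η_k ≥ 0, e_k ∈ H, and define x_{k+1} = (1−λ_k)x_k + λ_k T_k x_k + η_k e_k from x_0 ∈ H. Suppose ∩_k Fix T_k ≠ ∅ and ∑ η_k‖e_k‖ < ∞. Then ∑_k λ_k(1/α_k − λ_k)‖x_k − T_k x_k‖² < ∞, and for every x̄ ∈ ∩_k Fix T_k the limit lim_k ‖x_k − x̄‖ exists. -/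
variable {H : Type*} [NormedAddCommGroup H] [InnerProductSpace ℝ H] [CompleteSpace H]

lemma convex_norm_sq (μ : ℝ) (a b : H) :
    ‖(1-μ)•a + μ•b‖^2 = (1-μ)*‖a‖^2 + μ*‖b‖^2 - μ*(1-μ)*‖a-b‖^2 := by
  have h1 := norm_add_sq_real ((1-μ)•a) (μ•b)
  have h2 := norm_sub_sq_real a b
  rw [real_inner_smul_left, real_inner_smul_right, norm_smul, norm_smul,
    Real.norm_eq_abs, Real.norm_eq_abs, mul_pow, mul_pow, sq_abs, sq_abs] at h1
  nlinarith [h1, h2]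

lemma key_step {α lam : ℝ} (hα0 : 0 < α) (T : H → H) (hT : Averaged α T)
    (hl0 : 0 ≤ lam) (x xb : H) (hfix : T xb = xb) :
    ‖(1 - lam) • x + lam • T x - xb‖^2 ≤ ‖x - xb‖^2 - lam * (1/α - lam) * ‖x - T x‖^2 := by
  obtain ⟨R, hR, hTd⟩ := hT
  have hRfix : R xb = xb := by
    have h := hTd xb
    rw [hfix] at h
    have h2 : α • R xb = α • xb := by
      have e1 : α • R xb = (1-α) • xb + α • R xb - (1-α) • xb := by module
      rw [e1, ← h]; module
    exact smul_right_injective H hα0.ne' h2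
  have hy : (1 - lam) • x + lam • T x - xb
      = (1 - lam*α) • (x - xb) + (lam*α) • (R x - xb) := by
    rw [hTd x]; module
  have hxT : ‖x - T x‖^2 = α^2 * ‖x - R x‖^2 := by
    have : x - T x = α • (x - R x) := by rw [hTd x]; module
    rw [this, norm_smul, Real.norm_eq_abs, mul_pow, sq_abs]
  have hb : ‖R x - xb‖ ≤ ‖x - xb‖ := by
    have := hR x xb; rwa [hRfix] at this
  have hab : (x - xb) - (R x - xb) = x - R x := by abel
  have hb2 : ‖R x - xb‖^2 ≤ ‖x - xb‖^2 :=
    pow_le_pow_left₀ (norm_nonneg _) hb 2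
  have hμ : lam*α*(1-lam*α) = lam*(1/α-lam)*α^2 := by field_simp
  rw [hy, convex_norm_sq (lam*α) (x-xb) (R x - xb), hab, hxT]
  nlinarith [mul_nonneg hl0 hα0.le, sq_nonneg ‖x - R x‖, hb2, hμ, norm_nonneg (x - R x)]

lemma fejer_aux (α : ℕ → ℝ) (hα0 : ∀ k, 0 < α k)
    (T : ℕ → H → H) (hT : ∀ k, Averaged (α k) (T k))
    (lam : ℕ → ℝ) (hlam0 : ∀ k, 0 ≤ lam k) (hlam1 : ∀ k, lam k ≤ 1 / α k)
    (η : ℕ → ℝ) (hη : ∀ k, 0 ≤ η k) (e : ℕ → H)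
    (x : ℕ → H)
    (hx : ∀ k, x (k + 1) = (1 - lam k) • x k + lam k • T k (x k) + (η k) • e k)
    (hsum : Summable fun k => η k * ‖e k‖)
    (xb : H) (hfix : ∀ k, T k xb = xb) :
    ∃ ε : ℕ → ℝ, (∀ k, 0 ≤ ε k) ∧ (Summable ε) ∧
      ∀ k, ‖x (k+1) - xb‖^2 + lam k * (1/α k - lam k) * ‖x k - T k (x k)‖^2
        ≤ ‖x k - xb‖^2 + ε k := by
  set S : ℝ := ∑' k, η k * ‖e k‖ with hS
  have hnn : ∀ k, 0 ≤ η k * ‖e k‖ := fun k => mul_nonneg (hη k) (norm_nonneg _)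
  have hS0 : 0 ≤ S := tsum_nonneg hnn
  have hterm : ∀ k, η k * ‖e k‖ ≤ S := fun k => Summable.le_tsum hsum k fun j _ => hnn j
  have hkey : ∀ k, ‖(1 - lam k) • x k + lam k • T k (x k) - xb‖^2
      ≤ ‖x k - xb‖^2 - lam k * (1/α k - lam k) * ‖x k - T k (x k)‖^2 :=
    fun k => key_step (hα0 k) (T k) (hT k) (hlam0 k) (x k) xb (hfix k)
  have hak : ∀ k, 0 ≤ lam k * (1/α k - lam k) * ‖x k - T k (x k)‖^2 := fun k =>
    mul_nonneg (mul_nonneg (hlam0 k) (by linarith [hlam1 k])) (sq_nonneg _)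
  have hyle : ∀ k, ‖(1 - lam k) • x k + lam k • T k (x k) - xb‖ ≤ ‖x k - xb‖ := by
    intro k
    nlinarith [hkey k, hak k, norm_nonneg ((1 - lam k) • x k + lam k • T k (x k) - xb),
      norm_nonneg (x k - xb)]
  have hstep : ∀ k, ‖x (k+1) - xb‖
      ≤ ‖(1 - lam k) • x k + lam k • T k (x k) - xb‖ + η k * ‖e k‖ := by
    intro k
    have hd : x (k+1) - xb = ((1 - lam k) • x k + lam k • T k (x k) - xb) + (η k) • e k := by
      rw [hx k]; abel
    rw [hd]
    calc ‖_ + (η k) • e k‖ ≤ ‖(1 - lam k) • x k + lam k • T k (x k) - xb‖ + ‖(η k) • e k‖ :=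
          norm_add_le _ _
      _ ≤ _ := by rw [norm_smul, Real.norm_eq_abs, abs_of_nonneg (hη k)]
  set M : ℝ := ‖x 0 - xb‖ + S with hM
  have hbd : ∀ k, ‖x k - xb‖ ≤ M := by
    have key : ∀ k, ‖x k - xb‖ ≤ ‖x 0 - xb‖ + ∑ j ∈ Finset.range k, η j * ‖e j‖ := by
      intro k
      induction k with
      | zero => simp
      | succ n ih =>
        have := (hstep n).trans (add_le_add_left (hyle n) _)
        rw [Finset.sum_range_succ]; linarith
    intro k
    have hps : ∑ j ∈ Finset.range k, η j * ‖e j‖ ≤ S :=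
      Summable.sum_le_tsum (Finset.range k) (fun i _ => hnn i) hsum
    linarith [key k]
  have hM0 : 0 ≤ M := le_trans (norm_nonneg _) (hbd 0)
  refine ⟨fun k => η k * ‖e k‖ * (2*M + S), fun k =>
    mul_nonneg (hnn k) (by linarith [hterm k]), ?_, ?_⟩
  · exact Summable.mul_right _ hsum
  · intro k
    have h1 := hstep k
    have h2 := hkey k
    have h3 := hyle k
    have h4 := hbd k
    have h5 := hterm k
    have h6 := hnn k
    nlinarith [norm_nonneg (x (k+1) - xb),
      norm_nonneg ((1 - lam k) • x k + lam k • T k (x k) - xb)]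

theorem stmt15 (α : ℕ → ℝ) (hα0 : ∀ k, 0 < α k) (hα1 : ∀ k, α k ≤ 1)
    (T : ℕ → H → H) (hT : ∀ k, Averaged (α k) (T k))
    (lam : ℕ → ℝ) (hlam0 : ∀ k, 0 ≤ lam k) (hlam1 : ∀ k, lam k ≤ 1 / α k)
    (η : ℕ → ℝ) (hη : ∀ k, 0 ≤ η k) (e : ℕ → H)
    (x : ℕ → H)
    (hx : ∀ k, x (k + 1) = (1 - lam k) • x k + lam k • T k (x k) + (η k) • e k)
    (hC : ∃ z : H, ∀ k, T k z = z)
    (hsum : Summable fun k => η k * ‖e k‖) :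
    (Summable fun k => lam k * (1 / α k - lam k) * ‖x k - T k (x k)‖ ^ 2) ∧
    ∀ xb : H, (∀ k, T k xb = xb) →
      ∃ L : ℝ, Filter.Tendsto (fun k => ‖x k - xb‖) Filter.atTop (nhds L) := by
  have hak : ∀ k, 0 ≤ lam k * (1/α k - lam k) * ‖x k - T k (x k)‖^2 := fun k =>
    mul_nonneg (mul_nonneg (hlam0 k) (by linarith [hlam1 k])) (sq_nonneg _)
  constructor
  · obtain ⟨z, hz⟩ := hC
    obtain ⟨ε, hε0, hεs, hrec⟩ := fejer_aux α hα0 T hT lam hlam0 hlam1 η hη e x hx hsum z hz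
    have htel : ∀ n, ∑ k ∈ Finset.range n, lam k * (1/α k - lam k) * ‖x k - T k (x k)‖^2
        + ‖x n - z‖^2 ≤ ‖x 0 - z‖^2 + ∑ k ∈ Finset.range n, ε k := by
      intro n
      induction n with
      | zero => simp
      | succ m ih =>
        rw [Finset.sum_range_succ, Finset.sum_range_succ]
        linarith [hrec m]
    apply summable_of_sum_range_le (c := ‖x 0 - z‖^2 + ∑' k, ε k) hak
    intro n
    have h1 : ∑ k ∈ Finset.range n, ε k ≤ ∑' k, ε k :=
      Summable.sum_le_tsum (Finset.range n) (fun i _ => hε0 i) hεs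
    have := htel n
    nlinarith [sq_nonneg ‖x n - z‖]
  · intro xb hfix
    obtain ⟨ε, hε0, hεs, hrec⟩ := fejer_aux α hα0 T hT lam hlam0 hlam1 η hη e x hx hsum xb hfix
    set u : ℕ → ℝ := fun k => ‖x k - xb‖^2 - ∑ j ∈ Finset.range k, ε j with hu
    have hua : Antitone u := by
      apply antitone_nat_of_succ_le
      intro n
      simp only [hu]
      rw [Finset.sum_range_succ]
      linarith [hrec n, hak n]
    have hub : BddBelow (Set.range u) := by
      refine ⟨-∑' k, ε k, ?_⟩
      rintro _ ⟨n, rfl⟩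
      have h1 : ∑ j ∈ Finset.range n, ε j ≤ ∑' k, ε k :=
        Summable.sum_le_tsum (Finset.range n) (fun i _ => hε0 i) hεs
      simp only [hu]
      nlinarith [sq_nonneg ‖x n - xb‖]
    have hul : Filter.Tendsto u Filter.atTop (nhds (⨅ n, u n)) :=
      tendsto_atTop_ciInf hua hub
    have hps : Filter.Tendsto (fun n => ∑ j ∈ Finset.range n, ε j) Filter.atTop
        (nhds (∑' k, ε k)) := hεs.hasSum.tendsto_sum_nat
    have hd : Filter.Tendsto (fun n => ‖x n - xb‖^2) Filter.atTop
        (nhds ((⨅ n, u n) + ∑' k, ε k)) := by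
      have := hul.add hps
      convert this using 2 with n
      simp [hu]
    refine ⟨Real.sqrt ((⨅ n, u n) + ∑' k, ε k), ?_⟩
    have := hd.sqrt
    convert this using 2 with n
    rw [Real.sqrt_sq (norm_nonneg _)]
end

section
/- Let α ∈ (0,1], T: H → H α-averaged with Fix T ≠ ∅, (λ_k) ⊂ (0, 1/α] with ∑ λ_k(1 − αλ_k) = ∞, (e_k) ⊂ H and (η_k) ⊂ ℝ₊ with ∑ η_k‖e_k‖ < ∞. Define x_{k+1} = x_k + λ_k(Tx_k − x_k) + η_k e_k from x_0 ∈ H. Then (x_k) converges weakly to a point in Fix T. -/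
variable {H : Type*} [NormedAddCommGroup H] [InnerProductSpace ℝ H] [CompleteSpace H]

open Filter Topology

/-- A nonnegative quasi-decreasing sequence with summable errors converges, and is bounded by
`a 0 + ∑' ε`. -/
lemma quasi_conv (a ε : ℕ → ℝ) (ha : ∀ k, 0 ≤ a k) (hε : ∀ k, 0 ≤ ε k)
    (hsum : Summable ε) (hrec : ∀ k, a (k + 1) ≤ a k + ε k) :
    (∃ l, 0 ≤ l ∧ Tendsto a atTop (𝓝 l)) ∧ ∀ k, a k ≤ a 0 + ∑' i, ε i := by
  set t : ℕ → ℝ := fun i => ∑' k, ε (k + i) with ht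
  have hsum' : ∀ i, Summable fun k => ε (k + i) := fun i => (summable_nat_add_iff i).2 hsum
  have htnn : ∀ i, 0 ≤ t i := fun i => tsum_nonneg fun k => hε _
  have htstep : ∀ i, t i = ε i + t (i + 1) := by
    intro i
    calc t i = ε (0 + i) + ∑' k, ε (k + 1 + i) := Summable.tsum_eq_zero_add (hsum' i)
      _ = ε i + t (i + 1) := by
          rw [zero_add]
          congr 1
          apply tsum_congr
          intro k
          congr 1
          omega
  set b : ℕ → ℝ := fun k => a k + t k with hb
  have hant : Antitone b := by
    apply antitone_nat_of_succ_le
    intro n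
    have := hrec n
    have := htstep n
    simp only [hb]
    linarith
  have hbnn : ∀ k, 0 ≤ b k := fun k => add_nonneg (ha k) (htnn k)
  have hbdd : BddBelow (Set.range b) := ⟨0, by rintro y ⟨k, rfl⟩; exact hbnn k⟩
  have hbt : Tendsto b atTop (𝓝 (⨅ n, b n)) := tendsto_atTop_ciInf hant hbdd
  have htt : Tendsto t atTop (𝓝 0) := tendsto_sum_nat_add ε
  have hat : Tendsto a atTop (𝓝 ((⨅ n, b n) - 0)) := by
    have : a = fun k => b k - t k := by funext k; simp [hb]
    rw [this]
    exact hbt.sub htt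
  constructor
  · refine ⟨(⨅ n, b n) - 0, ?_, hat⟩
    rw [sub_zero]
    exact le_ciInf hbnn
  · intro k
    have h2 : b k ≤ b 0 := hant (Nat.zero_le k)
    have h3 : t 0 = ∑' i, ε i := by apply tsum_congr; intro k; rw [add_zero]
    simp only [hb] at h2
    rw [h3] at h2
    linarith [htnn k]

/-- Along any ultrafilter, a bounded real sequence has a limit. -/
lemma ultra_lim_bdd (U : Ultrafilter ℕ) (f : ℕ → ℝ) (C : ℝ) (hf : ∀ k, |f k| ≤ C) :
    ∃ c, |c| ≤ C ∧ Tendsto f (U : Filter ℕ) (𝓝 c) := by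
  have hcpt : IsCompact (Set.Icc (-C) C) := isCompact_Icc
  have hle : (Ultrafilter.map f U : Filter ℝ) ≤ 𝓟 (Set.Icc (-C) C) := by
    rw [le_principal_iff]
    refine Filter.mem_map.2 ?_
    apply Filter.univ_mem'
    intro k
    have := abs_le.1 (hf k)
    exact ⟨this.1, this.2⟩
  obtain ⟨c, hc, hle'⟩ := hcpt.ultrafilter_le_nhds (Ultrafilter.map f U) hle
  exact ⟨c, abs_le.2 ⟨hc.1, hc.2⟩, hle'⟩

/-- Along any ultrafilter, a bounded sequence in a Hilbert space has a weak limit. -/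
lemma weak_ultra (U : Ultrafilter ℕ) (x : ℕ → H) (M : ℝ) (hb : ∀ k, ‖x k‖ ≤ M) :
    ∃ p : H, ∀ u : H,
      Tendsto (fun k => (inner ℝ (x k) u : ℝ)) (U : Filter ℕ) (𝓝 (inner ℝ p u)) := by
  have key : ∀ u : H, ∃ c : ℝ, |c| ≤ M * ‖u‖ ∧
      Tendsto (fun k => (inner ℝ (x k) u : ℝ)) (U : Filter ℕ) (𝓝 c) := by
    intro u
    apply ultra_lim_bdd U _ (M * ‖u‖)
    intro k
    calc |(inner ℝ (x k) u : ℝ)| ≤ ‖x k‖ * ‖u‖ := abs_real_inner_le_norm _ _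
      _ ≤ M * ‖u‖ := mul_le_mul_of_nonneg_right (hb k) (norm_nonneg u)
  choose L hL1 hL2 using key
  have hadd : ∀ u v, L (u + v) = L u + L v := by
    intro u v
    refine tendsto_nhds_unique (hL2 (u + v)) ?_
    have := (hL2 u).add (hL2 v)
    simpa [inner_add_right] using this
  have hsmul : ∀ (c : ℝ) (u : H), L (c • u) = c * L u := by
    intro c u
    refine tendsto_nhds_unique (hL2 (c • u)) ?_
    have := (hL2 u).const_mul c
    simpa [inner_smul_right] using this
  let φ : H →ₗ[ℝ] ℝ :=
    { toFun := L, map_add' := hadd, map_smul' := hsmul }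
  let φ' : H →L[ℝ] ℝ := LinearMap.mkContinuous φ M (fun u => by
    rw [Real.norm_eq_abs]; exact hL1 u)
  refine ⟨(InnerProductSpace.toDual ℝ H).symm φ', fun u => ?_⟩
  have : (inner ℝ ((InnerProductSpace.toDual ℝ H).symm φ') u : ℝ) = φ' u :=
    InnerProductSpace.toDual_symm_apply
  rw [this]
  exact hL2 u

/-- The convexity identity for norms in a real inner ℝ product space. -/
lemma norm_combo_sq (μ : ℝ) (a b : H) :
    ‖(1 - μ) • a + μ • b‖ ^ 2
      = (1 - μ) * ‖a‖ ^ 2 + μ * ‖b‖ ^ 2 - μ * (1 - μ) * ‖a - b‖ ^ 2 := by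
  have h1 : ∀ v : H, ‖v‖ ^ 2 = (inner ℝ v v : ℝ) := fun v => (real_inner_self_eq_norm_sq v).symm
  simp only [h1, inner_add_left, inner_add_right, inner_sub_left, inner_sub_right,
    real_inner_smul_left, real_inner_smul_right]
  rw [real_inner_comm b a]
  ring

set_option maxHeartbeats 1000000 in
theorem stmt16 (α : ℝ) (hα0 : 0 < α) (hα1 : α ≤ 1) (T : H → H) (hT : Averaged α T)
    (hFix : ∃ x : H, T x = x)
    (lam : ℕ → ℝ) (hlam0 : ∀ k, 0 < lam k) (hlam1 : ∀ k, lam k ≤ 1 / α)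
    (hdiv : ¬ Summable fun k => lam k * (1 - α * lam k))
    (e : ℕ → H) (η : ℕ → ℝ) (hη : ∀ k, 0 ≤ η k)
    (hsum : Summable fun k => η k * ‖e k‖)
    (x : ℕ → H) (hx : ∀ k, x (k + 1) = x k + lam k • (T (x k) - x k) + (η k) • e k) :
    ∃ p : H, T p = p ∧ WeakConv x p := by
  classical
  obtain ⟨R, hR, hTR⟩ := hT
  obtain ⟨p0, hp0⟩ := hFix
  have hα0' : α ≠ 0 := ne_of_gt hα0
  -- p0 is a fixed point of R
  have hRp0 : R p0 = p0 := by
    have h1 : (1 - α) • p0 + α • R p0 = p0 := by rw [← hTR p0]; exact hp0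
    have h2 : α • R p0 = α • p0 := by
      have : (1 - α) • p0 = p0 - α • p0 := by module
      rw [this] at h1
      have : α • R p0 = p0 - (p0 - α • p0) := by linear_combination (norm := module) h1
      rw [this]; module
    exact smul_right_injective H hα0' h2
  set μ : ℕ → ℝ := fun k => α * lam k with hμdef
  have hμ0 : ∀ k, 0 < μ k := fun k => mul_pos hα0 (hlam0 k)
  have hμ1 : ∀ k, μ k ≤ 1 := by
    intro k
    have := mul_le_mul_of_nonneg_left (hlam1 k) hα0.le
    rwa [mul_one_div, div_self hα0'] at this
  set ε : ℕ → ℝ := fun k => η k * ‖e k‖ with hεdef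
  have hε0 : ∀ k, 0 ≤ ε k := fun k => mul_nonneg (hη k) (norm_nonneg _)
  have hεsum : Summable ε := hsum
  set S : ℝ := ∑' i, ε i with hSdef
  have hS0 : 0 ≤ S := tsum_nonneg hε0
  have hεS : ∀ k, ε k ≤ S := fun k => Summable.le_tsum hεsum k fun j _ => hε0 j
  -- the recurrence in terms of R
  have hxR : ∀ k, x (k + 1) = x k + μ k • (R (x k) - x k) + η k • e k := by
    intro k
    rw [hx k, hTR (x k)]
    simp only [hμdef]
    module
  set d : ℕ → ℝ := fun k => ‖R (x k) - x k‖ with hddef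
  have hd0 : ∀ k, 0 ≤ d k := fun k => norm_nonneg _
  -- Fejér monotonicity up to errors
  have key : ∀ q : H, R q = q → ∀ k, ‖x (k + 1) - q‖ ≤ ‖x k - q‖ + ε k := by
    intro q hq k
    have h1 : x (k + 1) - q = ((1 - μ k) • (x k - q) + μ k • (R (x k) - q)) + η k • e k := by
      rw [hxR k]; module
    rw [h1]
    have h2 : ‖(1 - μ k) • (x k - q) + μ k • (R (x k) - q)‖ ≤ ‖x k - q‖ := by
      have h3 : ‖R (x k) - q‖ ≤ ‖x k - q‖ := by
        conv_lhs => rw [← hq]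
        exact hR _ _
      calc ‖(1 - μ k) • (x k - q) + μ k • (R (x k) - q)‖
          ≤ ‖(1 - μ k) • (x k - q)‖ + ‖μ k • (R (x k) - q)‖ := norm_add_le _ _
        _ = (1 - μ k) * ‖x k - q‖ + μ k * ‖R (x k) - q‖ := by
            rw [norm_smul, norm_smul, Real.norm_eq_abs, Real.norm_eq_abs,
              abs_of_nonneg (by linarith [hμ1 k]), abs_of_nonneg (hμ0 k).le]
        _ ≤ ‖x k - q‖ := by nlinarith [hμ0 k, hμ1 k, norm_nonneg (x k - q)]
    calc ‖((1 - μ k) • (x k - q) + μ k • (R (x k) - q)) + η k • e k‖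
        ≤ ‖(1 - μ k) • (x k - q) + μ k • (R (x k) - q)‖ + ‖η k • e k‖ := norm_add_le _ _
      _ ≤ ‖x k - q‖ + ε k := by
          rw [norm_smul, Real.norm_eq_abs, abs_of_nonneg (hη k)]
          exact add_le_add h2 le_rfl
  -- limits of distances to fixed points exist
  have limq : ∀ q : H, R q = q → ∃ l, 0 ≤ l ∧ Tendsto (fun k => ‖x k - q‖) atTop (𝓝 l) :=
    fun q hq => (quasi_conv _ ε (fun k => norm_nonneg _) hε0 hεsum (key q hq)).1
  -- boundedness
  set B : ℝ := ‖x 0 - p0‖ + S with hBdef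
  have hB : ∀ k, ‖x k - p0‖ ≤ B :=
    (quasi_conv _ ε (fun k => norm_nonneg _) hε0 hεsum (key p0 hRp0)).2
  have hB0 : 0 ≤ B := le_trans (norm_nonneg _) (hB 0)
  set M : ℝ := B + ‖p0‖ with hMdef
  have hM : ∀ k, ‖x k‖ ≤ M := by
    intro k
    calc ‖x k‖ = ‖(x k - p0) + p0‖ := by rw [sub_add_cancel]
      _ ≤ ‖x k - p0‖ + ‖p0‖ := norm_add_le _ _
      _ ≤ M := add_le_add (hB k) le_rfl
  -- summability of μ(1-μ)d²
  have hstep : ∀ k, μ k * (1 - μ k) * d k ^ 2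
      ≤ ‖x k - p0‖ ^ 2 - ‖x (k + 1) - p0‖ ^ 2 + (2 * B + S) * ε k := by
    intro k
    set y : H := (1 - μ k) • (x k - p0) + μ k • (R (x k) - p0) with hydef
    have h1 : x (k + 1) - p0 = y + η k • e k := by rw [hxR k]; module
    have h4 : ‖x (k + 1) - p0‖ ≤ ‖y‖ + ε k := by
      rw [h1]
      calc ‖y + η k • e k‖ ≤ ‖y‖ + ‖η k • e k‖ := norm_add_le _ _
        _ = ‖y‖ + ε k := by rw [norm_smul, Real.norm_eq_abs, abs_of_nonneg (hη k)]
    have h5 : ‖y‖ ^ 2 = (1 - μ k) * ‖x k - p0‖ ^ 2 + μ k * ‖R (x k) - p0‖ ^ 2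
        - μ k * (1 - μ k) * d k ^ 2 := by
      rw [hydef, norm_combo_sq]
      congr 2
      have : (x k - p0) - (R (x k) - p0) = -(R (x k) - x k) := by module
      rw [this, norm_neg]
    have h3 : ‖R (x k) - p0‖ ≤ ‖x k - p0‖ := by
      conv_lhs => rw [← hRp0]
      exact hR _ _
    have hr2 : ‖R (x k) - p0‖ ^ 2 ≤ ‖x k - p0‖ ^ 2 :=
      pow_le_pow_left₀ (norm_nonneg _) h3 2
    have hA : (1 - μ k) * ‖x k - p0‖ ^ 2 + μ k * ‖R (x k) - p0‖ ^ 2 ≤ ‖x k - p0‖ ^ 2 := by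
      nlinarith [mul_nonneg (hμ0 k).le (sub_nonneg.2 hr2)]
    have hy2 : ‖y‖ ^ 2 ≤ ‖x k - p0‖ ^ 2 := by
      have hmd : 0 ≤ μ k * (1 - μ k) * d k ^ 2 :=
        mul_nonneg (mul_nonneg (hμ0 k).le (by linarith [hμ1 k])) (sq_nonneg _)
      linarith [h5]
    have hy : ‖y‖ ≤ ‖x k - p0‖ := by
      nlinarith [norm_nonneg y, norm_nonneg (x k - p0)]
    have h6a : ‖x (k + 1) - p0‖ ^ 2 ≤ (‖y‖ + ε k) ^ 2 :=
      pow_le_pow_left₀ (norm_nonneg _) h4 2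
    have h6 : ‖x (k + 1) - p0‖ ^ 2 ≤ ‖y‖ ^ 2 + (2 * B + S) * ε k := by
      have hb1 : ‖y‖ * ε k ≤ B * ε k :=
        mul_le_mul_of_nonneg_right (hy.trans (hB k)) (hε0 k)
      have hb2 : ε k * ε k ≤ S * ε k := mul_le_mul_of_nonneg_right (hεS k) (hε0 k)
      nlinarith [h6a]
    linarith [h5, hA, h6]
  have hsq : Summable (fun k => μ k * (1 - μ k) * d k ^ 2) := by
    apply summable_of_sum_range_le (c := ‖x 0 - p0‖ ^ 2 + (2 * B + S) * S)
    · intro k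
      exact mul_nonneg (mul_nonneg (hμ0 k).le (by linarith [hμ1 k])) (sq_nonneg _)
    · intro n
      have h1 : ∑ i ∈ Finset.range n, (μ i * (1 - μ i) * d i ^ 2)
          ≤ ∑ i ∈ Finset.range n,
            ((‖x i - p0‖ ^ 2 - ‖x (i + 1) - p0‖ ^ 2) + (2 * B + S) * ε i) :=
        Finset.sum_le_sum fun i _ => by linarith [hstep i]
      rw [Finset.sum_add_distrib, Finset.sum_range_sub' (fun i => ‖x i - p0‖ ^ 2) n,
        ← Finset.mul_sum] at h1
      have h2 : ∑ i ∈ Finset.range n, ε i ≤ S :=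
        Summable.sum_le_tsum _ (fun i _ => hε0 i) hεsum
      have h3 : 0 ≤ ‖x n - p0‖ ^ 2 := sq_nonneg _
      have h4 : 0 ≤ 2 * B + S := by linarith
      have h5 : (2 * B + S) * ∑ i ∈ Finset.range n, ε i ≤ (2 * B + S) * S :=
        mul_le_mul_of_nonneg_left h2 h4
      linarith
  -- d is quasi-decreasing
  have hdrec : ∀ k, d (k + 1) ≤ d k + 2 * ε k := by
    intro k
    have hd1 : ‖x (k + 1) - x k‖ ≤ μ k * d k + ε k := by
      have h1 : x (k + 1) - x k = μ k • (R (x k) - x k) + η k • e k := by rw [hxR k]; module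
      rw [h1]
      calc ‖μ k • (R (x k) - x k) + η k • e k‖
          ≤ ‖μ k • (R (x k) - x k)‖ + ‖η k • e k‖ := norm_add_le _ _
        _ = μ k * d k + ε k := by
            rw [norm_smul, norm_smul, Real.norm_eq_abs, Real.norm_eq_abs,
              abs_of_nonneg (hμ0 k).le, abs_of_nonneg (hη k)]
    have hd2 : ‖R (x k) - x (k + 1)‖ ≤ (1 - μ k) * d k + ε k := by
      have h1 : R (x k) - x (k + 1) = (1 - μ k) • (R (x k) - x k) - η k • e k := by
        rw [hxR k]; module
      rw [h1]
      calc ‖(1 - μ k) • (R (x k) - x k) - η k • e k‖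
          ≤ ‖(1 - μ k) • (R (x k) - x k)‖ + ‖η k • e k‖ := norm_sub_le _ _
        _ = (1 - μ k) * d k + ε k := by
            rw [norm_smul, norm_smul, Real.norm_eq_abs, Real.norm_eq_abs,
              abs_of_nonneg (by linarith [hμ1 k]), abs_of_nonneg (hη k)]
    have hd3 : d (k + 1) ≤ ‖R (x (k + 1)) - R (x k)‖ + ‖R (x k) - x (k + 1)‖ := by
      have : R (x (k + 1)) - x (k + 1) = (R (x (k + 1)) - R (x k)) + (R (x k) - x (k + 1)) := by
        module
      calc d (k + 1) = ‖R (x (k + 1)) - x (k + 1)‖ := rfl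
        _ = ‖(R (x (k + 1)) - R (x k)) + (R (x k) - x (k + 1))‖ := by rw [← this]
        _ ≤ _ := norm_add_le _ _
    have hd4 : ‖R (x (k + 1)) - R (x k)‖ ≤ ‖x (k + 1) - x k‖ := hR _ _
    linarith
  -- d converges, and its limit must be 0
  obtain ⟨⟨l, hl0, hld⟩, -⟩ :=
    quasi_conv d (fun k => 2 * ε k) hd0 (fun k => by linarith [hε0 k])
      (hεsum.mul_left 2) hdrec
  have hdlim : Tendsto d atTop (𝓝 0) := by
    have hl : l = 0 := by
      by_contra hne
      have hlpos : 0 < l := lt_of_le_of_ne hl0 (Ne.symm hne)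
      have hev : ∀ᶠ k in atTop, l / 2 ≤ d k :=
        hld.eventually (eventually_ge_nhds (by linarith))
      obtain ⟨N, hN⟩ := eventually_atTop.1 hev
      have hsh : Summable (fun k => μ (k + N) * (1 - μ (k + N))) := by
        have hnn : ∀ k, 0 ≤ μ (k + N) * (1 - μ (k + N)) := fun k => by
          nlinarith [hμ0 (k + N), hμ1 (k + N)]
        have hle : ∀ k, μ (k + N) * (1 - μ (k + N))
            ≤ (4 / l ^ 2) * (μ (k + N) * (1 - μ (k + N)) * d (k + N) ^ 2) := by
          intro k
          have hdk : l / 2 ≤ d (k + N) := hN (k + N) (by omega)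
          have h1 : 0 ≤ μ (k + N) * (1 - μ (k + N)) := hnn k
          have h2 : l ^ 2 / 4 ≤ d (k + N) ^ 2 := by nlinarith
          rw [div_mul_eq_mul_div, le_div_iff₀ (by positivity)]
          nlinarith
        exact Summable.of_nonneg_of_le hnn hle
          (((summable_nat_add_iff N).2 hsq).mul_left _)
      have hsμ : Summable (fun k => μ k * (1 - μ k)) := (summable_nat_add_iff N).1 hsh
      apply hdiv
      have := hsμ.mul_left α⁻¹
      convert this using 2 with k
      · rfl
      simp only [hμdef]
      field_simp
    rwa [hl] at hld
  -- for any ultrafilter extending atTop, the weak limit is a fixed point of R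
  have hmain : ∀ V : Ultrafilter ℕ, (V : Filter ℕ) ≤ atTop →
      ∃ q : H, R q = q ∧ ∀ u : H,
        Tendsto (fun k => (inner ℝ (x k) u : ℝ)) (V : Filter ℕ) (𝓝 (inner ℝ q u)) := by
    intro V hV
    obtain ⟨q, hq⟩ := weak_ultra V x M hM
    refine ⟨q, ?_, hq⟩
    set c : H := q - R q with hcdef
    set Bq : ℝ := M + ‖q‖ with hBqdef
    have hBq : ∀ k, ‖x k - q‖ ≤ Bq := by
      intro k
      calc ‖x k - q‖ ≤ ‖x k‖ + ‖q‖ := norm_sub_le _ _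
        _ ≤ Bq := add_le_add (hM k) le_rfl
    have hineq : ∀ k, ‖c‖ ^ 2
        ≤ 2 * ((inner ℝ q c : ℝ) - inner ℝ (x k) c) + d k * (2 * Bq + d k) := by
      intro k
      have h1 : ‖x k - R q‖ ≤ ‖x k - q‖ + d k := by
        have h2 : ‖R (x k) - R q‖ ≤ ‖x k - q‖ := hR _ _
        have h3 : x k - R q = -(R (x k) - x k) + (R (x k) - R q) := by module
        calc ‖x k - R q‖ = ‖-(R (x k) - x k) + (R (x k) - R q)‖ := by rw [← h3]
          _ ≤ ‖-(R (x k) - x k)‖ + ‖R (x k) - R q‖ := norm_add_le _ _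
          _ = d k + ‖R (x k) - R q‖ := by rw [norm_neg]
          _ ≤ ‖x k - q‖ + d k := by linarith
      have h2 : ‖x k - R q‖ ^ 2
          = ‖x k - q‖ ^ 2 + 2 * (inner ℝ (x k - q) c : ℝ) + ‖c‖ ^ 2 := by
        have : x k - R q = (x k - q) + c := by rw [hcdef]; module
        rw [this, norm_add_sq_real]
      have h4 : (inner ℝ (x k - q) c : ℝ) = inner ℝ (x k) c - inner ℝ q c := inner_sub_left _ _ _
      have h5 : ‖x k - R q‖ ^ 2 ≤ (‖x k - q‖ + d k) ^ 2 :=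
        pow_le_pow_left₀ (norm_nonneg _) h1 2
      have h6 : d k * ‖x k - q‖ ≤ d k * Bq :=
        mul_le_mul_of_nonneg_left (hBq k) (hd0 k)
      nlinarith [hd0 k]
    have hrhs : Tendsto
        (fun k => 2 * ((inner ℝ q c : ℝ) - inner ℝ (x k) c) + d k * (2 * Bq + d k))
        (V : Filter ℕ) (𝓝 0) := by
      have t1 : Tendsto (fun k => 2 * ((inner ℝ q c : ℝ) - inner ℝ (x k) c)) (V : Filter ℕ)
          (𝓝 (2 * ((inner ℝ q c : ℝ) - inner ℝ q c))) :=
        (tendsto_const_nhds.sub (hq c)).const_mul 2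
      have t2 : Tendsto (fun k => d k * (2 * Bq + d k)) (V : Filter ℕ)
          (𝓝 (0 * (2 * Bq + 0))) := by
        have hdV : Tendsto d (V : Filter ℕ) (𝓝 0) := hdlim.mono_left hV
        exact hdV.mul (tendsto_const_nhds.add hdV)
      have := t1.add t2
      simpa using this
    have hc2 : ‖c‖ ^ 2 ≤ 0 := ge_of_tendsto' hrhs fun k => hineq k
    have hc0 : c = 0 := by
      have : ‖c‖ = 0 := by nlinarith [norm_nonneg c, sq_nonneg ‖c‖]
      exact norm_eq_zero.1 this
    have : q - R q = 0 := hc0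
    exact (sub_eq_zero.1 this).symm
  -- the weak limit along one ultrafilter
  obtain ⟨p, hp, hpl⟩ := hmain (Ultrafilter.of atTop) (Ultrafilter.of_le _)
  refine ⟨p, ?_, ?_⟩
  · rw [hTR p, hp]
    module
  · intro u
    rw [Filter.tendsto_iff_ultrafilter]
    intro V hV
    obtain ⟨q, hq, hql⟩ := hmain V hV
    -- uniqueness of the weak cluster point
    have hqp : q = p := by
      obtain ⟨l1, -, h1⟩ := limq p hp
      obtain ⟨l2, -, h2⟩ := limq q hq
      have h1' : Tendsto (fun k => ‖x k - p‖ ^ 2) atTop (𝓝 (l1 ^ 2)) := h1.pow 2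
      have h2' : Tendsto (fun k => ‖x k - q‖ ^ 2) atTop (𝓝 (l2 ^ 2)) := h2.pow 2
      have hdif : Tendsto (fun k => ‖x k - p‖ ^ 2 - ‖x k - q‖ ^ 2) atTop
          (𝓝 (l1 ^ 2 - l2 ^ 2)) := h1'.sub h2'
      have hrepr : ∀ k, ‖x k - p‖ ^ 2 - ‖x k - q‖ ^ 2
          = ‖p‖ ^ 2 - ‖q‖ ^ 2 - 2 * (inner ℝ (x k) (p - q) : ℝ) := by
        intro k
        have e1 := norm_sub_sq_real (x k) p
        have e2 := norm_sub_sq_real (x k) q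
        have e3 : (inner ℝ (x k) (p - q) : ℝ) = inner ℝ (x k) p - inner ℝ (x k) q :=
          inner_sub_right _ _ _
        rw [e3]
        linarith
      have hU0 : Tendsto (fun k => ‖x k - p‖ ^ 2 - ‖x k - q‖ ^ 2)
          ((Ultrafilter.of atTop : Ultrafilter ℕ) : Filter ℕ)
          (𝓝 (‖p‖ ^ 2 - ‖q‖ ^ 2 - 2 * (inner ℝ p (p - q) : ℝ))) := by
        refine Tendsto.congr (fun k => (hrepr k).symm) ?_
        exact tendsto_const_nhds.sub ((hpl (p - q)).const_mul 2)
      have hV0 : Tendsto (fun k => ‖x k - p‖ ^ 2 - ‖x k - q‖ ^ 2)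
          (V : Filter ℕ)
          (𝓝 (‖p‖ ^ 2 - ‖q‖ ^ 2 - 2 * (inner ℝ q (p - q) : ℝ))) := by
        refine Tendsto.congr (fun k => (hrepr k).symm) ?_
        exact tendsto_const_nhds.sub ((hql (p - q)).const_mul 2)
      have c1 : l1 ^ 2 - l2 ^ 2 = ‖p‖ ^ 2 - ‖q‖ ^ 2 - 2 * (inner ℝ p (p - q) : ℝ) :=
        tendsto_nhds_unique (hdif.mono_left (Ultrafilter.of_le _)) hU0
      have c2 : l1 ^ 2 - l2 ^ 2 = ‖p‖ ^ 2 - ‖q‖ ^ 2 - 2 * (inner ℝ q (p - q) : ℝ) :=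
        tendsto_nhds_unique (hdif.mono_left hV) hV0
      have c3 : (inner ℝ p (p - q) : ℝ) = inner ℝ q (p - q) := by linarith
      have c4 : (inner ℝ (p - q) (p - q) : ℝ) = 0 := by
        rw [inner_sub_left]
        linarith
      have c5 : ‖p - q‖ ^ 2 = 0 := by rw [← real_inner_self_eq_norm_sq]; exact c4
      have c6 : p - q = 0 := by
        have : ‖p - q‖ = 0 := by nlinarith [norm_nonneg (p - q)]
        exact norm_eq_zero.1 this
      have := sub_eq_zero.1 c6
      exact this.symm
    rw [← hqp]
    exact hql u
end

section
/- Let A: H → 2^H be maximally monotone with zer A ≠ ∅. Consider the exact generalized proximal point iteration x_{k+1} = (1−λ_k)x_k + λ_k J_{c_k A} x_k with λ_k ∈ (0,2), c := inf_k c_k > 0. Suppose A is metrically subregular at x̄ ∈ zer A for 0 with constant κ on B[x̄;δ], and x_0 ∈ B[x̄;δ]. Set γ_k = 1 + κ/c_k and ρ_k = (1 − λ_k(2−λ_k)/γ_k²)^{1/2}. Then every x_k ∈ B[x̄;δ] and d(x_{k+1}, zer A) ≤ ρ_k d(x_k, zer A). -/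
variable {H : Type*} [NormedAddCommGroup H] [InnerProductSpace ℝ H] [CompleteSpace H]

lemma le_infDist' {s : Set H} (hs : s.Nonempty) {x : H} {b : ℝ}
    (h : ∀ y ∈ s, b ≤ dist x y) : b ≤ Metric.infDist x s := by
  by_contra hlt
  push_neg at hlt
  obtain ⟨y, hy, hdy⟩ := (Metric.infDist_lt_iff hs).mp hlt
  exact absurd (h y hy) (not_le.mpr hdy)

lemma resolvent_inner {A : H → Set H} (hA : MonotoneOp A) {cc : ℝ} (hcc : 0 < cc)
    {J : H → H} (hJ : IsResolvent cc A J) {z : H} (hz : (0:H) ∈ A z) (x : H) :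
    (0:ℝ) ≤ inner ℝ (J x - z) (x - J x) := by
  have h := hA (J x) (cc⁻¹ • (x - J x)) z 0 (hJ x) hz
  rw [sub_zero, inner_smul_right] at h
  have hcc' : 0 < cc⁻¹ := inv_pos.mpr hcc
  nlinarith

lemma descent {A : H → Set H} (hA : MonotoneOp A) {cc : ℝ} (hcc : 0 < cc)
    {J : H → H} (hJ : IsResolvent cc A J) {z : H} (hz : (0:H) ∈ A z) (x : H)
    {lam : ℝ} (hl0 : 0 < lam) :
    ‖(1 - lam) • x + lam • J x - z‖ ^ 2 ≤
      ‖x - z‖ ^ 2 - lam * (2 - lam) * ‖x - J x‖ ^ 2 := by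
  have key := resolvent_inner hA hcc hJ hz x
  set a := x - z with ha
  set b := x - J x with hb
  have hid : (1 - lam) • x + lam • J x - z = a - lam • b := by
    rw [ha, hb]; module
  have hab : ‖b‖ ^ 2 ≤ inner ℝ a b := by
    have h1 : (inner ℝ a b : ℝ) = inner ℝ b b + inner ℝ (a - b) b := by
      rw [← inner_add_left, add_sub_cancel]
    have h2 : a - b = J x - z := by rw [ha, hb]; abel
    have h3 : (0:ℝ) ≤ inner ℝ (a - b) b := by rw [h2]; exact key
    rw [h1, real_inner_self_eq_norm_sq]; linarith
  have hexp : ‖a - lam • b‖ ^ 2 = ‖a‖ ^ 2 - 2 * (lam * inner ℝ a b) + lam ^ 2 * ‖b‖ ^ 2 := by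
    rw [norm_sub_sq_real, inner_smul_right, norm_smul, mul_pow, Real.norm_eq_abs, sq_abs]
  rw [hid, hexp]
  nlinarith [norm_nonneg b, sq_nonneg ‖b‖]

lemma nonexp_fix {A : H → Set H} (hA : MonotoneOp A) {cc : ℝ} (hcc : 0 < cc)
    {J : H → H} (hJ : IsResolvent cc A J) {z : H} (hz : (0:H) ∈ A z) (x : H) :
    ‖J x - z‖ ≤ ‖x - z‖ := by
  have key := resolvent_inner hA hcc hJ hz x
  have h1 : (inner ℝ (J x - z) (x - z) : ℝ) = inner ℝ (J x - z) (x - J x) + ‖J x - z‖ ^ 2 := by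
    rw [← real_inner_self_eq_norm_sq, ← inner_add_right]
    congr 1; abel
  have h2 := real_inner_le_norm (J x - z) (x - z)
  nlinarith [norm_nonneg (J x - z), norm_nonneg (x - z)]

set_option maxHeartbeats 1000000 in
theorem stmt18 (A : H → Set H) (hA : MaxMonotone A) (hz : ∃ x : H, (0 : H) ∈ A x)
    (c : ℕ → ℝ) (cinf : ℝ) (hcinf : 0 < cinf) (hc : ∀ k, cinf ≤ c k)
    (J : ℕ → H → H) (hJ : ∀ k, IsResolvent (c k) A (J k))
    (lam : ℕ → ℝ) (hlam0 : ∀ k, 0 < lam k) (hlam1 : ∀ k, lam k < 2)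
    (x : ℕ → H) (hx : ∀ k, x (k + 1) = (1 - lam k) • x k + lam k • J k (x k))
    (xb : H) (hxb : (0 : H) ∈ A xb)
    (κ δ : ℝ) (hκ : 0 < κ) (hδ : 0 < δ)
    (hsub : ∀ z : H, ‖z - xb‖ ≤ δ →
      Metric.infDist z {w : H | (0 : H) ∈ A w} ≤ κ * Metric.infDist (0 : H) (A z))
    (hx0 : ‖x 0 - xb‖ ≤ δ) :
    ∀ k : ℕ, ‖x k - xb‖ ≤ δ ∧
      Metric.infDist (x (k + 1)) {w : H | (0 : H) ∈ A w} ≤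
        Real.sqrt (1 - lam k * (2 - lam k) / (1 + κ / c k) ^ 2) *
          Metric.infDist (x k) {w : H | (0 : H) ∈ A w} := by
  set Z : Set H := {w : H | (0 : H) ∈ A w} with hZdef
  have hZne : Z.Nonempty := ⟨xb, hxb⟩
  have hAmono : MonotoneOp A := hA.1
  have hck : ∀ k, 0 < c k := fun k => lt_of_lt_of_le hcinf (hc k)
  have hball : ∀ k, ‖x k - xb‖ ≤ δ := by
    intro k
    induction k with
    | zero => exact hx0
    | succ n ih =>
      have hd := descent hAmono (hck n) (hJ n) hxb (x n) (hlam0 n)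
      rw [hx n]
      have h2 : ‖(1 - lam n) • x n + lam n • J n (x n) - xb‖ ^ 2 ≤ δ ^ 2 := by
        nlinarith [mul_self_le_mul_self (norm_nonneg (x n - xb)) ih,
          mul_nonneg (mul_nonneg (hlam0 n).le (by linarith [hlam1 n] : (0:ℝ) ≤ 2 - lam n))
            (sq_nonneg ‖x n - J n (x n)‖)]
      have h3 := Real.sqrt_le_sqrt h2
      rwa [Real.sqrt_sq (norm_nonneg _), Real.sqrt_sq hδ.le] at h3
  intro k
  refine ⟨hball k, ?_⟩
  have hckpos := hck k
  have hYb : ‖J k (x k) - xb‖ ≤ δ :=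
    le_trans (nonexp_fix hAmono hckpos (hJ k) hxb (x k)) (hball k)
  have hu : (c k)⁻¹ • (x k - J k (x k)) ∈ A (J k (x k)) := hJ k (x k)
  have hAY : Metric.infDist (0 : H) (A (J k (x k))) ≤ (c k)⁻¹ * ‖x k - J k (x k)‖ := by
    have h := Metric.infDist_le_dist_of_mem (x := (0:H)) hu
    rwa [dist_zero_left, norm_smul, Real.norm_eq_abs,
      abs_of_pos (inv_pos.mpr hckpos)] at h
  have hYZ : Metric.infDist (J k (x k)) Z ≤ κ * ((c k)⁻¹ * ‖x k - J k (x k)‖) :=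
    (hsub (J k (x k)) hYb).trans (mul_le_mul_of_nonneg_left hAY hκ.le)
  set D := Metric.infDist (x k) Z with hDdef
  set D' := Metric.infDist (x (k + 1)) Z with hD'def
  have hD0 : 0 ≤ D := Metric.infDist_nonneg
  have hD'0 : 0 ≤ D' := Metric.infDist_nonneg
  have hγ : (1 : ℝ) ≤ 1 + κ / c k := by
    have := div_pos hκ hckpos; linarith
  have hD : D ≤ (1 + κ / c k) * ‖x k - J k (x k)‖ := by
    have h1 : D ≤ Metric.infDist (J k (x k)) Z + dist (x k) (J k (x k)) :=
      Metric.infDist_le_infDist_add_dist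
    rw [dist_eq_norm] at h1
    calc D ≤ Metric.infDist (J k (x k)) Z + ‖x k - J k (x k)‖ := h1
      _ ≤ κ * ((c k)⁻¹ * ‖x k - J k (x k)‖) + ‖x k - J k (x k)‖ := by linarith
      _ = (1 + κ / c k) * ‖x k - J k (x k)‖ := by rw [div_eq_mul_inv]; ring
  set t := lam k * (2 - lam k) / (1 + κ / c k) ^ 2 with htdef
  have hLpos : 0 < lam k * (2 - lam k) := by nlinarith [hlam0 k, hlam1 k]
  have hγpos : (0:ℝ) < 1 + κ / c k := lt_of_lt_of_le one_pos hγ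
  have ht0 : 0 ≤ t := div_nonneg hLpos.le (by positivity)
  have ht1 : t ≤ 1 := by
    rw [htdef, div_le_one (by positivity)]
    nlinarith [sq_nonneg (1 - lam k)]
  have htD : t * D ^ 2 ≤ lam k * (2 - lam k) * ‖x k - J k (x k)‖ ^ 2 := by
    have hD2 : D ^ 2 ≤ (1 + κ / c k) ^ 2 * ‖x k - J k (x k)‖ ^ 2 := by
      nlinarith [norm_nonneg (x k - J k (x k))]
    have htexp : t * (1 + κ / c k) ^ 2 = lam k * (2 - lam k) := by
      rw [htdef]; field_simp
    nlinarith [mul_le_mul_of_nonneg_left hD2 ht0]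
  have hsq : ∀ z ∈ Z, Real.sqrt (D' ^ 2 + t * D ^ 2) ≤ dist (x k) z := by
    intro z hzZ
    have hdz := descent hAmono hckpos (hJ k) hzZ (x k) (hlam0 k)
    have hle : D' ≤ ‖x (k + 1) - z‖ := by
      rw [← dist_eq_norm]; exact Metric.infDist_le_dist_of_mem hzZ
    have h2 : D' ^ 2 + t * D ^ 2 ≤ ‖x k - z‖ ^ 2 := by
      have h3 : ‖x (k + 1) - z‖ ^ 2 ≤
          ‖x k - z‖ ^ 2 - lam k * (2 - lam k) * ‖x k - J k (x k)‖ ^ 2 := by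
        rw [hx k]; exact hdz
      nlinarith
    calc Real.sqrt (D' ^ 2 + t * D ^ 2) ≤ Real.sqrt (‖x k - z‖ ^ 2) :=
          Real.sqrt_le_sqrt h2
      _ = ‖x k - z‖ := Real.sqrt_sq (norm_nonneg _)
      _ = dist (x k) z := (dist_eq_norm _ _).symm
  have h6 : Real.sqrt (D' ^ 2 + t * D ^ 2) ≤ D := le_infDist' hZne hsq
  have h7 : D' ^ 2 + t * D ^ 2 ≤ D ^ 2 := by
    have ha : 0 ≤ D' ^ 2 + t * D ^ 2 := by positivity
    have h7' := sq_le_sq' (by linarith [Real.sqrt_nonneg (D' ^ 2 + t * D ^ 2)] :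
      -D ≤ Real.sqrt (D' ^ 2 + t * D ^ 2)) h6
    rwa [Real.sq_sqrt ha] at h7'
  have h8 : D' ^ 2 ≤ (1 - t) * D ^ 2 := by nlinarith
  calc D' = Real.sqrt (D' ^ 2) := (Real.sqrt_sq hD'0).symm
    _ ≤ Real.sqrt ((1 - t) * D ^ 2) := Real.sqrt_le_sqrt h8
    _ = Real.sqrt (1 - t) * D := by
        rw [Real.sqrt_mul (by linarith), Real.sqrt_sq hD0]
end
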